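/- If C′ is a minimum vertex cover and S′ a minimum simultaneous dominating set of a connected graph G, then |C′| ≤ 2|S′| − 1. -/

import Mathlib

open SimpleGraph

variable {V : Type*}

/-- Number of connected components of a graph. -/
noncomputable def numComponents (G : SimpleGraph V) : ℕ := Nat.card G.ConnectedComponent

/-- A vertex is a cut vertex if its removal increases the number of connected components. -/
def IsCutVertex (G : SimpleGraph V) (v : V) : Prop :=
  numComponents G < numComponents (G.induce {u | u ≠ v})

/-- `T` is a spanning tree of `G`: a subgraph on all vertices of `G` that is a tree. -/
def IsSpanningTree (G T : SimpleGraph V) : Prop := T ≤ G ∧ T.IsTree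

/-- `v` is dominated by `S` in the graph `T`. -/
def DominatedIn (T : SimpleGraph V) (S : Set V) (v : V) : Prop :=
  v ∈ S ∨ ∃ u ∈ S, T.Adj v u

/-- `v` is simultaneously dominated by `S`: dominated in every spanning tree of `G`. -/
def SimDominated (G : SimpleGraph V) (S : Set V) (v : V) : Prop :=
  ∀ T : SimpleGraph V, IsSpanningTree G T → DominatedIn T S v

/-- `S` is a simultaneous dominating set of `G`. -/
def IsSDSet (G : SimpleGraph V) (S : Set V) : Prop := ∀ v, SimDominated G S v

/-- `C` is a vertex cover of `G`. -/
def IsVertexCover (G : SimpleGraph V) (C : Set V) : Prop :=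
  ∀ ⦃u v : V⦄, G.Adj u v → u ∈ C ∨ v ∈ C

/-- A block of `G`: a maximal vertex set inducing a connected subgraph without cut vertices. -/
def IsBlock (G : SimpleGraph V) (B : Set V) : Prop :=
  B.Nonempty ∧ (G.induce B).Connected ∧ (∀ x, ¬ IsCutVertex (G.induce B) x) ∧
    ∀ B' : Set V, B ⊆ B' → (G.induce B').Connected →
      (∀ x, ¬ IsCutVertex (G.induce B') x) → B' = B

/-- 2-connected: connected, at least 3 vertices, no cut vertex. -/
def TwoConnected (G : SimpleGraph V) [Fintype V] : Prop :=
  G.Connected ∧ 3 ≤ Fintype.card V ∧ ∀ v, ¬ IsCutVertex G v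

/-- Colours 1, 0, 0̂. -/
inductive Col : Type
  | one | zero | zhat
deriving DecidableEq

/-- `S` is an `f`-respecting simultaneous dominating set of `G`. -/
def RespSDS (G : SimpleGraph V) (f : V → Col) (S : Set V) : Prop :=
  (∀ v, f v = Col.one → v ∈ S) ∧ ∀ v, f v = Col.zhat → SimDominated G S v

/-- A minimum `f`-respecting simultaneous dominating set. -/
def MinRespSDS (G : SimpleGraph V) (f : V → Col) (S : Set V) : Prop :=
  RespSDS G f S ∧ ∀ S' : Set V, RespSDS G f S' → S.ncard ≤ S'.ncard


namespace SDaux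

universe u

/-- The set of edges from `v` to `S`. -/
def DelS {V : Type*} (S : Set V) (v : V) : Set (Sym2 V) := {e | ∃ s ∈ S, e = s(v, s)}

/-- `v` is "cut-dominated": removing all edges from `v` to `S` disconnects the graph. -/
def CD {V : Type*} (G : SimpleGraph V) (S : Set V) (v : V) : Prop :=
  ¬ (G.deleteEdges (DelS S v)).Connected

variable {V : Type*}

lemma reachable_del_of_reachable {G : SimpleGraph V} {v w : V}
    (hvw : (G.deleteEdges {s(v, w)}).Reachable v w) {a b : V} (h : G.Reachable a b) :
    (G.deleteEdges {s(v, w)}).Reachable a b := by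
  obtain ⟨p⟩ := h
  induction p with
  | nil => exact Reachable.refl _
  | @cons x y z h p ih =>
    refine Reachable.trans ?_ ih
    by_cases he : s(x, y) = s(v, w)
    · rw [Sym2.eq_iff] at he
      rcases he with ⟨rfl, rfl⟩ | ⟨rfl, rfl⟩
      · exact hvw
      · exact hvw.symm
    · exact (SimpleGraph.Adj.reachable (by rw [deleteEdges_adj]; exact ⟨h, by simpa using he⟩))

lemma exists_spanning_tree [Finite V] {G : SimpleGraph V} (hG : G.Connected) :
    ∃ T ≤ G, T.IsTree := by
  obtain ⟨T, ⟨hTG, hTc⟩, hmin⟩ := (wellFounded_lt (α := SimpleGraph V)).has_min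
      {T | T ≤ G ∧ T.Connected} ⟨G, le_refl G, hG⟩
  refine ⟨T, hTG, hTc, ?_⟩
  intro u c hc
  cases c with
  | nil => exact hc.ne_nil rfl
  | @cons _ x _ h p =>
    have he : s(u, x) ∈ (Walk.cons h p).edges := by simp
    have hre := (adj_and_reachable_delete_edges_iff_exists_cycle.mpr ⟨u, _, hc, he⟩).2
    set T' := T.deleteEdges {s(u, x)} with hT'
    have hT'lt : T' < T := by
      refine lt_of_le_of_ne (deleteEdges_le _) ?_
      intro heq
      have : T'.Adj u x := heq ▸ h
      rw [deleteEdges_adj] at this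
      simp at this
    have hT'c : T'.Connected := by
      have : Nonempty V := hTc.nonempty
      exact Connected.mk fun a b => reachable_del_of_reachable hre (hTc.preconnected a b)
    exact hmin T' ⟨le_trans (deleteEdges_le _) hTG, hT'c⟩ hT'lt

lemma cd_of_sd [Finite V] {G : SimpleGraph V} (hG : G.Connected) {S : Set V} {v : V}
    (hdom : SimDominated G S v) (hv : v ∉ S) : CD G S v := by
  intro hcon
  obtain ⟨T, hTle, hTtree⟩ := exists_spanning_tree hcon
  rcases hdom T ⟨hTle.trans (deleteEdges_le _), hTtree⟩ with h | ⟨s, hs, hadj⟩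
  · exact hv h
  · have h2 := hTle hadj
    rw [deleteEdges_adj] at h2
    exact h2.2 ⟨s, hs, rfl⟩

/-- Frontier along a walk. -/
lemma walk_frontier {G : SimpleGraph V} {A : Set V} :
    ∀ {a b : V}, G.Walk a b → a ∈ A → b ∉ A → ∃ x y, G.Adj x y ∧ x ∈ A ∧ y ∉ A := by
  intro a b w
  induction w with
  | nil => intro h h'; exact absurd h h'
  | @cons x y z h p ih =>
    intro ha hb
    by_cases hy : y ∈ A
    · exact ih hy hb
    · exact ⟨x, y, h, ha, hy⟩

/-- Boundary of the non-reachable set. -/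
lemma nonreach_boundary {G : SimpleGraph V} {S : Set V} {v a b : V}
    (ha : ¬ (G.deleteEdges (DelS S v)).Reachable v a)
    (hb : (G.deleteEdges (DelS S v)).Reachable v b)
    (hab : G.Adj a b) : b = v ∧ a ∈ S := by
  by_cases he : s(a, b) ∈ DelS S v
  · obtain ⟨s, hs, he⟩ := he
    rw [Sym2.eq_iff] at he
    rcases he with ⟨rfl, rfl⟩ | ⟨rfl, rfl⟩
    · exact absurd (Reachable.refl _) ha
    · exact ⟨rfl, hs⟩
  · exfalso
    refine ha (hb.trans (SimpleGraph.Adj.reachable ?_))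
    rw [deleteEdges_adj]
    exact ⟨hab.symm, by rwa [Sym2.eq_swap] at he⟩

lemma nonreach_nonempty {G : SimpleGraph V} [Nonempty V] (h : ¬ G.Connected) (v : V) :
    ∃ z, ¬ G.Reachable v z := by
  by_contra hall
  push_neg at hall
  exact h (Connected.mk fun a b => (hall a).symm.trans (hall b))

/-- Reachability in an induced subgraph that is closed except at `u₀`. -/
lemma reach_induce {G : SimpleGraph V} {A : Set V} :
    ∀ {z u₀ : V} (_ : G.Walk z u₀) (hu : u₀ ∈ A)
      (_ : ∀ x y, x ∈ A → x ≠ u₀ → G.Adj x y → y ∈ A) (hz : z ∈ A),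
      (G.induce A).Reachable ⟨z, hz⟩ ⟨u₀, hu⟩ := by
  intro z u₀ w
  induction w with
  | nil => intro hu hcl hz; exact Reachable.refl _
  | @cons x y u h p ih =>
    intro hu hcl hx
    by_cases hxu : x = u
    · subst hxu; exact Reachable.refl _
    · have hy : y ∈ A := hcl x y hx hxu h
      have hadj : (G.induce A).Adj ⟨x, hx⟩ ⟨y, hy⟩ := by
        simp only [comap_adj, Function.Embedding.coe_subtype]
        exact h
      exact (SimpleGraph.Adj.reachable hadj).trans (ih hu hcl hy)

/-- If `v` is cut-dominated and `G` is connected, there is an `s ∈ S` adjacent to `v`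
that is unreachable from `v` after deleting the `v`–`S` edges. -/
lemma exists_S_mem {G : SimpleGraph V} [Nonempty V] (hG : G.Preconnected) {S : Set V} {v : V}
    (hCD : CD G S v) :
    ∃ s ∈ S, ¬ (G.deleteEdges (DelS S v)).Reachable v s ∧ G.Adj s v := by
  obtain ⟨z, hz⟩ := nonreach_nonempty hCD v
  obtain ⟨w⟩ := hG z v
  have hvX : v ∉ {z | ¬ (G.deleteEdges (DelS S v)).Reachable v z} := by
    simp only [Set.mem_setOf_eq, not_not]
    exact Reachable.refl v
  obtain ⟨a, b, hab, haX, hbX⟩ := walk_frontier w hz hvX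
  have hb' : (G.deleteEdges (DelS S v)).Reachable v b := not_not.mp hbX
  obtain ⟨rfl, haS⟩ := nonreach_boundary haX hb' hab
  exact ⟨a, haS, haX, hab⟩

/-- Transfer of cut-domination to an induced subgraph. -/
lemma transfer {G : SimpleGraph V} [Nonempty V] {S W : Set V} {u₀ x : V}
    (hu₀ : u₀ ∈ W) (hx : x ∈ W) (hxu : x ≠ u₀) (hCD : CD G S x)
    (H4 : ∀ y (hy : y ∉ W), (G.induce (Wᶜ ∪ {u₀})).Reachable ⟨y, Or.inl hy⟩ ⟨u₀, Or.inr rfl⟩) :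
    CD (G.induce W) {z : ↥W | ↑z ∈ S} ⟨x, hx⟩ := by
  classical
  set H := G.deleteEdges (DelS S x) with hH
  have hstep : ∃ y₀, ∃ hy₀ : y₀ ∈ W, ¬ H.Reachable x y₀ := by
    by_contra hcon
    push_neg at hcon
    obtain ⟨z₀, hz₀⟩ := nonreach_nonempty hCD x
    have hz₀W : z₀ ∉ W := fun h => hz₀ (hcon z₀ h)
    obtain ⟨wk⟩ := H4 z₀ hz₀W
    have hstart : (⟨z₀, Or.inl hz₀W⟩ : ↥(Wᶜ ∪ {u₀})) ∈ {p : ↥(Wᶜ ∪ {u₀}) | ¬ H.Reachable x ↑p} :=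
      hz₀
    have hend : (⟨u₀, Or.inr rfl⟩ : ↥(Wᶜ ∪ {u₀})) ∉ {p : ↥(Wᶜ ∪ {u₀}) | ¬ H.Reachable x ↑p} := by
      simp only [Set.mem_setOf_eq, not_not]
      exact hcon u₀ hu₀
    obtain ⟨p, q, hpq, hpB, hqB⟩ := walk_frontier wk hstart hend
    have hpq' : G.Adj ↑p ↑q := hpq
    have hq' : H.Reachable x ↑q := not_not.mp hqB
    obtain ⟨hqx, _⟩ := nonreach_boundary hpB hq' hpq'
    rcases q.2 with h | h
    · rw [hqx] at h; exact h hx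
    · rw [Set.mem_singleton_iff] at h; rw [hqx] at h; exact hxu h
  obtain ⟨y₀, hy₀W, hy₀⟩ := hstep
  intro hconn
  have hmap : ∀ (a b : ↥W),
      ((G.induce W).deleteEdges (DelS {z : ↥W | ↑z ∈ S} ⟨x, hx⟩)).Adj a b → H.Adj ↑a ↑b := by
    rintro a b hab
    rw [deleteEdges_adj] at hab
    obtain ⟨hadj, hne⟩ := hab
    rw [hH, deleteEdges_adj]
    refine ⟨hadj, ?_⟩
    rintro ⟨s, hs, he⟩
    rw [Sym2.eq_iff] at he
    rcases he with ⟨ha, hb⟩ | ⟨ha, hb⟩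
    · refine hne ⟨b, ?_, ?_⟩
      · simp only [Set.mem_setOf_eq, hb]; exact hs
      · have : a = ⟨x, hx⟩ := Subtype.ext ha
        rw [this]
    · refine hne ⟨a, ?_, ?_⟩
      · simp only [Set.mem_setOf_eq, ha]; exact hs
      · have : b = ⟨x, hx⟩ := Subtype.ext hb
        rw [this, Sym2.eq_swap]
  let f : ((G.induce W).deleteEdges (DelS {z : ↥W | ↑z ∈ S} ⟨x, hx⟩)) →g H :=
    ⟨fun z => ↑z, fun {a b} hab => hmap a b hab⟩
  have := (hconn.preconnected ⟨x, hx⟩ ⟨y₀, hy₀W⟩).map f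
  exact hy₀ this

lemma keyL : ∀ (n : ℕ) {V : Type u} [Finite V] (G : SimpleGraph V), G.Connected →
    ∀ S : Set V, Nat.card V ≤ n →
    ∃ C : Set V, (∀ a b, G.Adj a b → a ∉ S → b ∉ S → CD G S a → CD G S b → a ∈ C ∨ b ∈ C)
      ∧ C.ncard ≤ S.ncard - 1 := by
  intro n
  induction n with
  | zero =>
    intro V _ G hG S hcard
    haveI : Nonempty V := hG.nonempty
    have := Nat.card_pos (α := V)
    omega
  | succ n ih =>
    intro V _ G hG S hcard
    haveI : Nonempty V := hG.nonempty
    by_cases hE : ∃ p : V × V, G.Adj p.1 p.2 ∧ p.1 ∉ S ∧ p.2 ∉ S ∧ CD G S p.1 ∧ CD G S p.2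
    case neg =>
      refine ⟨∅, ?_, by simp⟩
      intro a b h ha hb ca cb
      exact absurd ⟨(a, b), h, ha, hb, ca, cb⟩ hE
    case pos =>
    obtain ⟨⟨u, w⟩, huw, huS, hwS, hCDu, hCDw⟩ := hE
    set H := G.deleteEdges (DelS S u) with hH
    set X : Set V := {z | ¬ H.Reachable u z} with hX
    have hXu : u ∉ X := fun h => h (Reachable.refl u)
    have hHuw : H.Adj u w := by
      rw [hH, deleteEdges_adj]
      refine ⟨huw, ?_⟩
      rintro ⟨s, hs, he⟩
      rw [Sym2.eq_iff] at he
      rcases he with ⟨-, rfl⟩ | ⟨rfl, rfl⟩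
      · exact hwS hs
      · exact huS hs
    have hXw : w ∉ X := fun h => h hHuw.reachable
    have bd : ∀ a b, a ∈ X → b ∉ X → G.Adj a b → b = u ∧ a ∈ S := by
      intro a b haX hbX hab
      have hbX' : H.Reachable u b := not_not.mp hbX
      exact nonreach_boundary haX hbX' hab
    obtain ⟨s0, hs0S, hs0X, hs0adj⟩ := exists_S_mem hG.preconnected hCDu
    set W1 : Set V := X ∪ {u} with hW1
    set W2 : Set V := Xᶜ with hW2
    have huW1 : u ∈ W1 := Or.inr rfl
    have huW2 : u ∈ W2 := hXu
    have hcl1 : ∀ x y, x ∈ W1 → x ≠ u → G.Adj x y → y ∈ W1 := by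
      intro x y hx hxu hxy
      rcases hx with hx | hx
      · by_cases hy : y ∈ X
        · exact Or.inl hy
        · exact Or.inr (bd x y hx hy hxy).1
      · exact absurd hx hxu
    have hcl2 : ∀ x y, x ∈ W2 → x ≠ u → G.Adj x y → y ∈ W2 := by
      intro x y hx hxu hxy
      by_cases hy : y ∈ X
      · exact absurd (bd y x hy hx hxy.symm).1 hxu
      · exact hy
    have reach1 : ∀ z (hz : z ∈ W1), (G.induce W1).Reachable ⟨z, hz⟩ ⟨u, huW1⟩ := by
      intro z hz
      obtain ⟨wk⟩ := hG.preconnected z u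
      exact reach_induce wk huW1 hcl1 hz
    have reach2 : ∀ z (hz : z ∈ W2), (G.induce W2).Reachable ⟨z, hz⟩ ⟨u, huW2⟩ := by
      intro z hz
      obtain ⟨wk⟩ := hG.preconnected z u
      exact reach_induce wk huW2 hcl2 hz
    haveI : Nonempty ↥W1 := ⟨⟨u, huW1⟩⟩
    haveI : Nonempty ↥W2 := ⟨⟨u, huW2⟩⟩
    have hG1conn : (G.induce W1).Connected :=
      Connected.mk fun a b => (reach1 a a.2).trans (reach1 b b.2).symm
    have hG2conn : (G.induce W2).Connected :=
      Connected.mk fun a b => (reach2 a a.2).trans (reach2 b b.2).symm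
    have hcard1 : Nat.card ↥W1 ≤ n := by
      have h1 : W1 ≠ Set.univ := by
        intro h
        have hw' : w ∈ W1 := h ▸ Set.mem_univ w
        rcases hw' with h' | h'
        · exact hXw h'
        · exact huw.ne' h'
      have hlt : Nat.card ↥W1 < Nat.card V := by
        rw [Nat.card_coe_set_eq, ← Set.ncard_univ V]
        exact Set.ncard_lt_ncard (Set.ssubset_univ_iff.mpr h1) Set.finite_univ
      omega
    have hcard2 : Nat.card ↥W2 ≤ n := by
      have h1 : W2 ≠ Set.univ := by
        intro h
        have hs' : s0 ∈ W2 := h ▸ Set.mem_univ s0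
        exact hs' hs0X
      have hlt : Nat.card ↥W2 < Nat.card V := by
        rw [Nat.card_coe_set_eq, ← Set.ncard_univ V]
        exact Set.ncard_lt_ncard (Set.ssubset_univ_iff.mpr h1) Set.finite_univ
      omega
    obtain ⟨C1, hcov1, hcard1'⟩ := ih (G.induce W1) hG1conn {z : ↥W1 | ↑z ∈ S} hcard1
    obtain ⟨C2, hcov2, hcard2'⟩ := ih (G.induce W2) hG2conn {z : ↥W2 | ↑z ∈ S} hcard2
    have H4_1 : ∀ y (hy : y ∉ W1),
        (G.induce (W1ᶜ ∪ {u})).Reachable ⟨y, Or.inl hy⟩ ⟨u, Or.inr rfl⟩ := by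
      intro y hy
      have hclA : ∀ x y', x ∈ W1ᶜ ∪ {u} → x ≠ u → G.Adj x y' → y' ∈ W1ᶜ ∪ {u} := by
        intro x y' hx hxu hxy
        rcases hx with hx | hx
        · have hxX : x ∉ X := fun h => hx (Or.inl h)
          by_cases hy' : y' ∈ X
          · exact absurd (bd y' x hy' hxX hxy.symm).1 hxu
          · by_cases hy'u : y' = u
            · exact Or.inr hy'u
            · refine Or.inl ?_
              intro h
              rcases h with h | h
              · exact hy' h
              · exact hy'u h
        · exact absurd hx hxu
      obtain ⟨wk⟩ := hG.preconnected y u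
      exact reach_induce wk (Or.inr rfl) hclA (Or.inl hy)
    have H4_2 : ∀ y (hy : y ∉ W2),
        (G.induce (W2ᶜ ∪ {u})).Reachable ⟨y, Or.inl hy⟩ ⟨u, Or.inr rfl⟩ := by
      intro y hy
      have hclA : ∀ x y', x ∈ W2ᶜ ∪ {u} → x ≠ u → G.Adj x y' → y' ∈ W2ᶜ ∪ {u} := by
        intro x y' hx hxu hxy
        have hxX : x ∈ X := by
          rcases hx with hx | hx
          · simpa [hW2] using hx
          · exact absurd hx hxu
        by_cases hy' : y' ∈ X
        · exact Or.inl (by simpa [hW2] using hy')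
        · exact Or.inr (bd x y' hxX hy' hxy).1
      obtain ⟨wk⟩ := hG.preconnected y u
      exact reach_induce wk (Or.inr rfl) hclA (Or.inl hy)
    have tr1 : ∀ (x) (hx : x ∈ X), x ∉ S → CD G S x →
        CD (G.induce W1) {z : ↥W1 | ↑z ∈ S} ⟨x, Or.inl hx⟩ := by
      intro x hx _ hCDx
      exact transfer huW1 (Or.inl hx) (fun h => hXu (h ▸ hx)) hCDx H4_1
    have tr2 : ∀ (y) (hy : y ∉ X), y ≠ u → y ∉ S → CD G S y →
        CD (G.induce W2) {z : ↥W2 | ↑z ∈ S} ⟨y, hy⟩ := by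
      intro y hy hyu _ hCDy
      exact transfer huW2 hy hyu hCDy H4_2
    have hS1 : Subtype.val '' {z : ↥W1 | ↑z ∈ S} = S ∩ X := by
      ext z
      constructor
      · rintro ⟨⟨z', hz'⟩, hz'S, rfl⟩
        rcases hz' with h | h
        · exact ⟨hz'S, h⟩
        · exact absurd (h ▸ hz'S) huS
      · rintro ⟨hzS, hzX⟩
        exact ⟨⟨z, Or.inl hzX⟩, hzS, rfl⟩
    have hS2 : Subtype.val '' {z : ↥W2 | ↑z ∈ S} = S ∩ Xᶜ := by
      ext z
      constructor
      · rintro ⟨⟨z', hz'⟩, h, rfl⟩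
        exact ⟨h, hz'⟩
      · rintro ⟨hzS, hzX⟩
        exact ⟨⟨z, hzX⟩, hzS, rfl⟩
    have hn1 : {z : ↥W1 | ↑z ∈ S}.ncard = (S ∩ X).ncard := by
      rw [← hS1, Set.ncard_image_of_injective _ Subtype.val_injective]
    have hn2 : {z : ↥W2 | ↑z ∈ S}.ncard = (S ∩ Xᶜ).ncard := by
      rw [← hS2, Set.ncard_image_of_injective _ Subtype.val_injective]
    have hSX : (S ∩ X).Nonempty := ⟨s0, hs0S, hs0X⟩
    have hSXc : (S ∩ Xᶜ).Nonempty := by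
      have hCD2 : CD (G.induce W2) {z : ↥W2 | ↑z ∈ S} ⟨w, hXw⟩ :=
        tr2 w hXw huw.ne' hwS hCDw
      obtain ⟨s2, hs2S, -, -⟩ := exists_S_mem hG2conn.preconnected hCD2
      exact ⟨↑s2, hs2S, s2.2⟩
    have hsum : (S ∩ X).ncard + (S \ X).ncard = S.ncard :=
      Set.ncard_inter_add_ncard_diff_eq_ncard S X (Set.toFinite S)
    have hdiff : S ∩ Xᶜ = S \ X := (Set.diff_eq S X).symm
    refine ⟨(Subtype.val '' C1) ∪ (Subtype.val '' C2) ∪ {u}, ?_, ?_⟩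
    · intro a b hab haS hbS hCDa hCDb
      by_cases haX : a ∈ X <;> by_cases hbX : b ∈ X
      · have hadj1 : (G.induce W1).Adj ⟨a, Or.inl haX⟩ ⟨b, Or.inl hbX⟩ := hab
        have := hcov1 _ _ hadj1 haS hbS (tr1 a haX haS hCDa) (tr1 b hbX hbS hCDb)
        rcases this with h | h
        · exact Or.inl (Or.inl (Or.inl ⟨_, h, rfl⟩))
        · exact Or.inr (Or.inl (Or.inl ⟨_, h, rfl⟩))
      · exact absurd (bd a b haX hbX hab).2 haS
      · exact absurd (bd b a hbX haX hab.symm).2 hbS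
      · by_cases hau : a = u
        · exact Or.inl (Or.inr hau)
        · by_cases hbu : b = u
          · exact Or.inr (Or.inr hbu)
          · have hadj2 : (G.induce W2).Adj ⟨a, haX⟩ ⟨b, hbX⟩ := hab
            have := hcov2 _ _ hadj2 haS hbS (tr2 a haX hau haS hCDa) (tr2 b hbX hbu hbS hCDb)
            rcases this with h | h
            · exact Or.inl (Or.inl (Or.inr ⟨_, h, rfl⟩))
            · exact Or.inr (Or.inl (Or.inr ⟨_, h, rfl⟩))
    · have e1 : (Subtype.val '' C1).ncard = C1.ncard :=
        Set.ncard_image_of_injective _ Subtype.val_injective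
      have e2 : (Subtype.val '' C2).ncard = C2.ncard :=
        Set.ncard_image_of_injective _ Subtype.val_injective
      have hb1 : ((Subtype.val '' C1) ∪ (Subtype.val '' C2) ∪ {u}).ncard ≤
          (Subtype.val '' C1).ncard + (Subtype.val '' C2).ncard + 1 := by
        calc ((Subtype.val '' C1) ∪ (Subtype.val '' C2) ∪ {u}).ncard
            ≤ ((Subtype.val '' C1) ∪ (Subtype.val '' C2)).ncard + ({u} : Set V).ncard :=
              Set.ncard_union_le _ _
          _ ≤ (Subtype.val '' C1).ncard + (Subtype.val '' C2).ncard + 1 := by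
              have := Set.ncard_union_le (Subtype.val '' C1) (Subtype.val '' C2)
              rw [Set.ncard_singleton]
              omega
      have p1 : 0 < (S ∩ X).ncard := (Set.ncard_pos (Set.toFinite _)).mpr hSX
      have p2 : 0 < (S ∩ Xᶜ).ncard := (Set.ncard_pos (Set.toFinite _)).mpr hSXc
      rw [hn1] at hcard1'
      rw [hn2] at hcard2'
      rw [hdiff] at p2 hcard2'
      omega

end SDaux

/-- A minimum vertex cover `C'` and a minimum SD-set `S'` of a connected graph
satisfy `|C'| ≤ 2|S'| - 1`. -/
theorem stmt6 [Fintype V] (G : SimpleGraph V) (hG : G.Connected) (C' S' : Set V)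
    (hC : _root_.IsVertexCover G C') (hCmin : ∀ C : Set V, _root_.IsVertexCover G C → C'.ncard ≤ C.ncard)
    (hS : IsSDSet G S') (hSmin : ∀ S : Set V, IsSDSet G S → S'.ncard ≤ S.ncard) :
    C'.ncard ≤ 2 * S'.ncard - 1 := by
  classical
  obtain ⟨Cov, hcov, hcovcard⟩ := SDaux.keyL (Nat.card V) G hG S' (le_refl _)
  have hVC : _root_.IsVertexCover G (S' ∪ Cov) := by
    intro a b hab
    by_cases haS : a ∈ S'
    · exact Or.inl (Or.inl haS)
    by_cases hbS : b ∈ S'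
    · exact Or.inr (Or.inl hbS)
    rcases hcov a b hab haS hbS (SDaux.cd_of_sd hG (hS a) haS)
      (SDaux.cd_of_sd hG (hS b) hbS) with h | h
    · exact Or.inl (Or.inr h)
    · exact Or.inr (Or.inr h)
  have h1 := hCmin _ hVC
  have h2 : (S' ∪ Cov).ncard ≤ S'.ncard + Cov.ncard := Set.ncard_union_le _ _
  omega
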